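/- For any permutation σ ∈ S_n, the number of descents of σ equals the number of distinct non-zero values appearing in the saillance code Sc(σ). -/

import Mathlib

open Finset

namespace Paper

/-- The word of `σ` at 0-based position `i`, with 0-based values (`0` outside range). -/
def wrd {n : ℕ} (σ : Equiv.Perm (Fin n)) (i : ℕ) : ℕ :=
  if h : i < n then (σ ⟨i, h⟩ : ℕ) else 0

/-- The descent set of `σ`, in 1-based positions: `{ i ∈ {1,…,n-1} | σ(i) > σ(i+1) }`. -/
def Des {n : ℕ} (σ : Equiv.Perm (Fin n)) : Finset ℕ :=
  (Finset.Ioo 0 n).filter fun i => wrd σ i < wrd σ (i - 1)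

/-- The major index: the sum of the (1-based) descent positions. -/
def maj {n : ℕ} (σ : Equiv.Perm (Fin n)) : ℕ := ∑ i ∈ Des σ, i

/-- The number of descents. -/
def des {n : ℕ} (σ : Equiv.Perm (Fin n)) : ℕ := (Des σ).card

/-- The number of inversions. -/
def inv {n : ℕ} (σ : Equiv.Perm (Fin n)) : ℕ :=
  (Finset.univ.filter fun p : Fin n × Fin n => p.1 < p.2 ∧ σ p.2 < σ p.1).card

/-- The Lehmer code, as a function `ℕ → ℕ` (0-based index, zero outside `[0, n)`):
`Lc σ i = #{ j > i | σ(j) < σ(i) }`. -/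
def Lc {n : ℕ} (σ : Equiv.Perm (Fin n)) (i : ℕ) : ℕ :=
  if h : i < n then (Finset.univ.filter fun j : Fin n => i < (j : ℕ) ∧ σ j < σ ⟨i, h⟩).card
  else 0

/-- The inversion code (invcode) is the Lehmer code of the inverse. -/
def Ic {n : ℕ} (σ : Equiv.Perm (Fin n)) : ℕ → ℕ := Lc σ⁻¹

/-- The word of a permutation, with 1-based values. -/
def word {n : ℕ} (σ : Equiv.Perm (Fin n)) : List ℕ := List.ofFn fun i => (σ i : ℕ) + 1

/-- The major index of a word: the sum of the 1-based positions `t` with `w_t > w_{t+1}`. -/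
def majL (l : List ℕ) : ℕ :=
  ∑ t ∈ Finset.range (l.length - 1), if l.getD (t + 1) 0 < l.getD t 0 then t + 1 else 0

/-- The major code, as a function `ℕ → ℕ` (0-based index `i`, i.e. paper's `m_{i+1}`):
`m_i = maj(σ^{(i)}) - maj(σ^{(i+1)})` where `σ^{(i)}` keeps only the letters `≥ i`. -/
def Mc {n : ℕ} (σ : Equiv.Perm (Fin n)) (i : ℕ) : ℕ :=
  majL ((word σ).filter fun x => decide (i + 1 ≤ x)) -
    majL ((word σ).filter fun x => decide (i + 2 ≤ x))

/-- The saillance code, as a function `ℕ → ℕ` (0-based index `i`, i.e. about the letter of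
0-based value `i`): the number of letters of `σ` that are `≥` the rightmost letter located to
the left of `i` and greater than `i` (0 if there is no such letter). -/
def Sc {n : ℕ} (σ : Equiv.Perm (Fin n)) (i : ℕ) : ℕ :=
  if h : i < n then
    let L := Finset.univ.filter fun j : Fin n => j < σ⁻¹ ⟨i, h⟩ ∧ (⟨i, h⟩ : Fin n) < σ j
    if hL : L.Nonempty then n - (σ (L.max' hL) : ℕ) else 0
  else 0

/-- Sub-diagonal sequences, as functions `ℕ → ℕ` supported on `[0, n)` with
`c_i ≤ n - 1 - i` there (0-based; i.e. `0 ≤ c_i ≤ n - i` in 1-based indexing). -/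
def SubDiag (n : ℕ) : Set (ℕ → ℕ) :=
  {c | (∀ i, i < n → c i + i < n) ∧ ∀ i, n ≤ i → c i = 0}

/-- The permutation `τ_M(β)` of `{0,…,n}`: `τ_M(β)(i) = des(β) - j` if `i` is the `j`-th
descent of `β`, and `τ_M(β)(i) = des(β) + j - 1` if `i` is the `j`-th rise (position `0`
counting as a rise). -/
def tauM {n : ℕ} (β : Equiv.Perm (Fin n)) (i : ℕ) : ℕ :=
  if i ∈ Des β then des β - ((Des β).filter fun d => d ≤ i).card
  else des β + ((Finset.range (i + 1)).filter fun r => r ∉ Des β).card - 1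

/-- The permutation `τ_S(β)` of `{0,…,n}`: `τ_S(β)(0) = 0` and `τ_S(β)(i) = n + 1 - β(i)`
(1-based values) for `1 ≤ i ≤ n`. -/
def tauS {n : ℕ} (β : Equiv.Perm (Fin n)) (i : ℕ) : ℕ :=
  if h : 1 ≤ i ∧ i ≤ n then n - (β ⟨i - 1, by omega⟩ : ℕ) else 0

/-- The complete homogeneous symmetric polynomial `h_k(X_m)` in the variables
`x_0, …, x_m`. -/
noncomputable def hpoly (k m : ℕ) : MvPolynomial ℕ ℤ :=
  ∑ f ∈ Finset.univ.filter (fun f : Fin k → Fin (m + 1) => ∀ a b : Fin k, a ≤ b → f a ≤ f b),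
    ∏ t : Fin k, MvPolynomial.X ((f t : ℕ))

/-- The (proper) descent set of a composition `I = (i_1,…,i_r)`:
`{i_1, i_1+i_2, …, i_1+⋯+i_{r-1}}`. -/
def DesComp (I : List ℕ) : Finset ℕ :=
  (Finset.range (I.length - 1)).image fun k => (I.take (k + 1)).sum

end Paper


lemma Sc_spec' {n : ℕ} (σ : Equiv.Perm (Fin n)) (i : ℕ) (hi : i < n)
    (hL : (Finset.univ.filter fun j : Fin n => j < σ⁻¹ ⟨i, hi⟩ ∧ (⟨i, hi⟩ : Fin n) < σ j).Nonempty) :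
    Paper.Sc σ i = n - (σ ((Finset.univ.filter fun j : Fin n => j < σ⁻¹ ⟨i, hi⟩ ∧ (⟨i, hi⟩ : Fin n) < σ j).max' hL) : ℕ) := by
  rw [Paper.Sc, dif_pos hi, dif_pos hL]

lemma Sc_zero' {n : ℕ} (σ : Equiv.Perm (Fin n)) (i : ℕ) (hi : i < n)
    (hL : ¬(Finset.univ.filter fun j : Fin n => j < σ⁻¹ ⟨i, hi⟩ ∧ (⟨i, hi⟩ : Fin n) < σ j).Nonempty) :
    Paper.Sc σ i = 0 := by
  rw [Paper.Sc, dif_pos hi, dif_neg hL]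

lemma wrd_pos' {n : ℕ} (σ : Equiv.Perm (Fin n)) (k : ℕ) (h : k < n) :
    Paper.wrd σ k = (σ ⟨k, h⟩ : ℕ) := dif_pos h

lemma Sc_forward {n : ℕ} (σ : Equiv.Perm (Fin n)) (i : ℕ) (hi : i < n)
    (hne : Paper.Sc σ i ≠ 0) :
    ∃ d ∈ Paper.Des σ, n - Paper.wrd σ (d - 1) = Paper.Sc σ i := by
  by_cases hL : (Finset.univ.filter fun j : Fin n =>
      j < σ⁻¹ ⟨i, hi⟩ ∧ (⟨i, hi⟩ : Fin n) < σ j).Nonempty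
  swap
  · exact absurd (Sc_zero' σ i hi hL) hne
  set L := Finset.univ.filter fun j : Fin n =>
      j < σ⁻¹ ⟨i, hi⟩ ∧ (⟨i, hi⟩ : Fin n) < σ j with hLdef
  set p := L.max' hL with hp
  have hpmem : p ∈ L := L.max'_mem hL
  rw [hLdef, Finset.mem_filter] at hpmem
  obtain ⟨-, hp1, hp2⟩ := hpmem
  have hp1' : (p : ℕ) < (σ⁻¹ (⟨i, hi⟩ : Fin n) : ℕ) := hp1
  have hp2' : i < (σ p : ℕ) := hp2
  have hpn : (p : ℕ) + 1 < n := by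
    have := (σ⁻¹ (⟨i, hi⟩ : Fin n)).isLt
    omega
  have hnext : (σ ⟨(p : ℕ) + 1, hpn⟩ : ℕ) ≤ i := by
    by_contra hgt
    push_neg at hgt
    by_cases heq : (⟨(p : ℕ) + 1, hpn⟩ : Fin n) = σ⁻¹ ⟨i, hi⟩
    · have h5 : σ (⟨(p : ℕ) + 1, hpn⟩ : Fin n) = ⟨i, hi⟩ := by
        rw [heq]; exact σ.apply_symm_apply _
      rw [h5] at hgt
      simp at hgt
    · have h2 : (p : ℕ) + 1 ≠ (σ⁻¹ (⟨i, hi⟩ : Fin n) : ℕ) := by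
        intro h; exact heq (Fin.ext h)
      have hlt : (⟨(p : ℕ) + 1, hpn⟩ : Fin n) < σ⁻¹ ⟨i, hi⟩ := by
        rw [Fin.lt_def]
        show (p : ℕ) + 1 < (σ⁻¹ (⟨i, hi⟩ : Fin n) : ℕ)
        omega
      have hmemL : (⟨(p : ℕ) + 1, hpn⟩ : Fin n) ∈ L := by
        rw [hLdef, Finset.mem_filter]
        refine ⟨Finset.mem_univ _, hlt, ?_⟩
        rw [Fin.lt_def]
        exact hgt
      have h6 := Fin.le_def.mp (L.le_max' _ hmemL)
      have h7 : (p : ℕ) + 1 ≤ (p : ℕ) := h6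
      omega
  refine ⟨(p : ℕ) + 1, ?_, ?_⟩
  · rw [Paper.Des, Finset.mem_filter, Finset.mem_Ioo]
    refine ⟨⟨Nat.succ_pos _, hpn⟩, ?_⟩
    have hpn' : (p : ℕ) < n := p.isLt
    rw [show (p : ℕ) + 1 - 1 = (p : ℕ) by omega,
      wrd_pos' σ _ hpn, wrd_pos' σ _ hpn']
    have h8 : i < (σ ⟨(p : ℕ), hpn'⟩ : ℕ) := by
      have h9 : (⟨(p : ℕ), hpn'⟩ : Fin n) = p := Fin.ext rfl
      rw [h9]; exact hp2'
    omega
  · rw [show (p : ℕ) + 1 - 1 = (p : ℕ) by omega, wrd_pos' σ _ p.isLt,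
      Sc_spec' σ i hi hL]

lemma Sc_backward {n : ℕ} (σ : Equiv.Perm (Fin n)) (d : ℕ) (hd0 : 0 < d) (hdn : d < n)
    (hd1 : d - 1 < n) (hdes : (σ ⟨d, hdn⟩ : ℕ) < (σ ⟨d - 1, hd1⟩ : ℕ)) :
    Paper.Sc σ (σ ⟨d, hdn⟩ : ℕ) = n - (σ ⟨d - 1, hd1⟩ : ℕ) := by
  have hi : ((σ ⟨d, hdn⟩ : Fin n) : ℕ) < n := (σ ⟨d, hdn⟩).isLt
  have hfin : (⟨(σ ⟨d, hdn⟩ : ℕ), hi⟩ : Fin n) = σ ⟨d, hdn⟩ := Fin.ext rfl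
  have hinv : σ⁻¹ (⟨(σ ⟨d, hdn⟩ : ℕ), hi⟩ : Fin n) = ⟨d, hdn⟩ := by
    rw [hfin]; exact σ.symm_apply_apply _
  have hinv' : (σ⁻¹ (⟨(σ ⟨d, hdn⟩ : ℕ), hi⟩ : Fin n) : ℕ) = d := by rw [hinv]
  set L := Finset.univ.filter fun j : Fin n =>
      j < σ⁻¹ ⟨(σ ⟨d, hdn⟩ : ℕ), hi⟩ ∧
        (⟨(σ ⟨d, hdn⟩ : ℕ), hi⟩ : Fin n) < σ j with hLdef
  have hmem : (⟨d - 1, hd1⟩ : Fin n) ∈ L := by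
    rw [hLdef, Finset.mem_filter]
    refine ⟨Finset.mem_univ _, ?_, ?_⟩
    · rw [Fin.lt_def]
      show d - 1 < (σ⁻¹ (⟨(σ ⟨d, hdn⟩ : ℕ), hi⟩ : Fin n) : ℕ)
      omega
    · rw [Fin.lt_def]
      show ((⟨(σ ⟨d, hdn⟩ : ℕ), hi⟩ : Fin n) : ℕ) < (σ ⟨d - 1, hd1⟩ : ℕ)
      exact hdes
  have hL : L.Nonempty := ⟨_, hmem⟩
  have hmax : L.max' hL = ⟨d - 1, hd1⟩ := by
    refine le_antisymm ?_ (L.le_max' _ hmem)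
    have hm : L.max' hL ∈ L := L.max'_mem hL
    have hm1' : ((L.max' hL : Fin n) : ℕ) <
        (σ⁻¹ (⟨(σ ⟨d, hdn⟩ : ℕ), hi⟩ : Fin n) : ℕ) :=
      Fin.lt_def.mp (Finset.mem_filter.mp hm).2.1
    rw [Fin.le_def]
    show ((L.max' hL : Fin n) : ℕ) ≤ d - 1
    omega
  rw [Sc_spec' σ _ hi hL]
  exact congrArg (fun x => n - (σ x : ℕ)) hmax

/-- The number of descents of `σ` equals the number of distinct non-zero values appearing
in its saillance code. -/
theorem des_eq_card_nonzero_values_scode (n : ℕ) (σ : Equiv.Perm (Fin n)) :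
    ((((Finset.range n).image (Paper.Sc σ))).filter fun v => v ≠ 0).card = Paper.des σ := by
  classical
  have hset : (((Finset.range n).image (Paper.Sc σ)).filter fun v => v ≠ 0)
      = (Paper.Des σ).image (fun d => n - Paper.wrd σ (d - 1)) := by
    ext v
    simp only [Finset.mem_filter, Finset.mem_image, Finset.mem_range]
    constructor
    · rintro ⟨⟨i, hi, rfl⟩, hne⟩
      obtain ⟨d, hd, hv⟩ := Sc_forward σ i hi hne
      exact ⟨d, hd, hv⟩
    · rintro ⟨d, hd, rfl⟩
      rw [Paper.Des, Finset.mem_filter, Finset.mem_Ioo] at hd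
      obtain ⟨⟨hd0, hdn⟩, hdes⟩ := hd
      have hd1 : d - 1 < n := by omega
      rw [wrd_pos' σ d hdn, wrd_pos' σ (d - 1) hd1] at hdes
      have hval := Sc_backward σ d hd0 hdn hd1 hdes
      rw [wrd_pos' σ (d - 1) hd1]
      refine ⟨⟨(σ ⟨d, hdn⟩ : ℕ), (σ ⟨d, hdn⟩).isLt, hval⟩, ?_⟩
      have := (σ (⟨d - 1, hd1⟩ : Fin n)).isLt
      omega
  rw [hset, Paper.des]
  apply Finset.card_image_of_injOn
  intro a ha b hb hab
  rw [Finset.mem_coe, Paper.Des, Finset.mem_filter, Finset.mem_Ioo] at ha hb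
  obtain ⟨⟨ha0, han⟩, -⟩ := ha
  obtain ⟨⟨hb0, hbn⟩, -⟩ := hb
  have ha1 : a - 1 < n := by omega
  have hb1 : b - 1 < n := by omega
  simp only at hab
  rw [wrd_pos' σ (a - 1) ha1, wrd_pos' σ (b - 1) hb1] at hab
  have hva := (σ (⟨a - 1, ha1⟩ : Fin n)).isLt
  have hvb := (σ (⟨b - 1, hb1⟩ : Fin n)).isLt
  have heq : (σ (⟨a - 1, ha1⟩ : Fin n) : ℕ) = (σ (⟨b - 1, hb1⟩ : Fin n) : ℕ) := by omega
  have h2 : (⟨a - 1, ha1⟩ : Fin n) = ⟨b - 1, hb1⟩ := σ.injective (Fin.ext heq)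
  have h3 : a - 1 = b - 1 := congrArg Fin.val h2
  omega
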